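/- Let V be a finite-dimensional irreducible U'_q(L(sl₂))-module with dim V ≥ 2. Then there exist a positive integer d and s₀ ∈ {1,−1} such that K₀ is diagonalizable on V, every eigenvalue of K₀ is of the form s₀q^{2i−d} for some 0 ≤ i ≤ d, and V is the direct sum of the eigenspaces of K₀ corresponding to s₀q^{2i−d}, 0 ≤ i ≤ d. -/

import Mathlib

open scoped TensorProduct

noncomputable section

/-- The `q`-integer `[t] = (q^t - q^(-t))/(q - q⁻¹)`. -/
def qnum (q : ℂ) (t : ℤ) : ℂ := (q ^ t - q ^ (-t)) / (q - q⁻¹)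

/-- The `q`-factorial `[t]! = [t][t-1]⋯[1]`. -/
def qfac (q : ℂ) (t : ℕ) : ℂ := ∏ k ∈ Finset.range t, qnum q ((k : ℤ) + 1)

/-- Commutator `[X,Y] = XY - YX`. -/
def brk {V : Type*} [AddCommGroup V] [Module ℂ V] (X Y : Module.End ℂ V) :
    Module.End ℂ V := X * Y - Y * X

/-- `q`-commutator `[X,Y]_t = t XY - t⁻¹ YX`. -/
def brkq {V : Type*} [AddCommGroup V] [Module ℂ V] (t : ℂ) (X Y : Module.End ℂ V) :
    Module.End ℂ V := t • (X * Y) - t⁻¹ • (Y * X)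

/-- A `U'_q(L(sl₂))`-module structure on a complex vector space `V`:
operators `(E₀⁺, E₁⁺, E₁⁻, K₀, K₁)` with `K₀, K₁` mutually inverse (hence invertible) and
the defining relations; `K₀ = K₁⁻¹` throughout. -/
structure IsUqpRep (q : ℂ) {V : Type*} [AddCommGroup V] [Module ℂ V]
    (E0 E1p E1m K0 K1 : Module.End ℂ V) : Prop where
  K0K1 : K0 * K1 = 1
  K1K0 : K1 * K0 = 1
  K0E0 : K0 * E0 = q ^ 2 • (E0 * K0)
  K1E1p : K1 * E1p = q ^ 2 • (E1p * K1)
  K1E1m : K1 * E1m = (q ^ 2)⁻¹ • (E1m * K1)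
  K1E0 : K1 * E0 = (q ^ 2)⁻¹ • (E0 * K1)
  K0E1p : K0 * E1p = (q ^ 2)⁻¹ • (E1p * K0)
  K0E1m : K0 * E1m = q ^ 2 • (E1m * K0)
  e1comm : E1p * E1m - E1m * E1p = (q - q⁻¹)⁻¹ • (K1 - K0)
  e0e1m : E0 * E1m = E1m * E0
  serre01 : brk E0 (brkq q⁻¹ E0 (brkq q E0 E1p)) = 0
  serre10 : brk E1p (brkq q⁻¹ E1p (brkq q E1p E0)) = 0

/-- `K₀` of the evaluation module `V(ℓ,a)`: `K₀ vᵢ = q^(2i-ℓ) vᵢ`. -/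
def evalK0 (q : ℂ) (ℓ : ℕ) : Module.End ℂ (Fin (ℓ + 1) → ℂ) :=
  (Matrix.diagonal fun i : Fin (ℓ + 1) => q ^ (2 * (i : ℤ) - ℓ)).mulVecLin

/-- `K₁` of the evaluation module `V(ℓ,a)`: `K₁ vᵢ = q^(ℓ-2i) vᵢ`. -/
def evalK1 (q : ℂ) (ℓ : ℕ) : Module.End ℂ (Fin (ℓ + 1) → ℂ) :=
  (Matrix.diagonal fun i : Fin (ℓ + 1) => q ^ ((ℓ : ℤ) - 2 * i)).mulVecLin

/-- `E₀⁺` of the evaluation module `V(ℓ,a)`: `E₀⁺ vᵢ = a q [i+1] vᵢ₊₁`. -/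
def evalE0 (q a : ℂ) (ℓ : ℕ) : Module.End ℂ (Fin (ℓ + 1) → ℂ) :=
  (Matrix.of fun j i : Fin (ℓ + 1) =>
    if (j : ℕ) = (i : ℕ) + 1 then a * q * qnum q ((i : ℤ) + 1) else 0).mulVecLin

/-- `E₁⁺` of the evaluation module `V(ℓ,a)`: `E₁⁺ vᵢ = [ℓ-i+1] vᵢ₋₁`. -/
def evalE1p (q : ℂ) (ℓ : ℕ) : Module.End ℂ (Fin (ℓ + 1) → ℂ) :=
  (Matrix.of fun j i : Fin (ℓ + 1) =>
    if (i : ℕ) = (j : ℕ) + 1 then qnum q ((ℓ : ℤ) - (i : ℤ) + 1) else 0).mulVecLin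

/-- `E₁⁻` of the evaluation module `V(ℓ,a)`: `E₁⁻ vᵢ = [i+1] vᵢ₊₁`. -/
def evalE1m (q : ℂ) (ℓ : ℕ) : Module.End ℂ (Fin (ℓ + 1) → ℂ) :=
  (Matrix.of fun j i : Fin (ℓ + 1) =>
    if (j : ℕ) = (i : ℕ) + 1 then qnum q ((i : ℤ) + 1) else 0).mulVecLin

/-- Irreducibility: the only subspaces invariant under all five operators are `⊥` and `⊤`. -/
def IsIrred {V : Type*} [AddCommGroup V] [Module ℂ V]
    (E0 E1p E1m K0 K1 : Module.End ℂ V) : Prop :=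
  ∀ W : Submodule ℂ V, (∀ v ∈ W, E0 v ∈ W) → (∀ v ∈ W, E1p v ∈ W) →
    (∀ v ∈ W, E1m v ∈ W) → (∀ v ∈ W, K0 v ∈ W) → (∀ v ∈ W, K1 v ∈ W) →
    W = ⊥ ∨ W = ⊤

/-- Type `(1,1)`: `K₀` is diagonalizable with all eigenvalues of the form `q^(2i-d)`,
`0 ≤ i ≤ d`, i.e. the corresponding eigenspaces span. -/
def IsType11 (q : ℂ) {V : Type*} [AddCommGroup V] [Module ℂ V] (K0 : Module.End ℂ V) : Prop :=
  ∃ d : ℕ, ⨆ i : Fin (d + 1), Module.End.eigenspace K0 (q ^ (2 * (i : ℤ) - d)) = ⊤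

section AuxStmt4

open Module Module.End Submodule Finset

variable {V : Type*} [AddCommGroup V] [Module ℂ V]

private lemma stmt4_zpow_inj {q : ℂ} (hq0 : q ≠ 0) (hq : ∀ n : ℕ, 0 < n → q ^ n ≠ 1) :
    ∀ a b : ℤ, q ^ a = q ^ b → a = b := by
  have key : ∀ n : ℤ, q ^ n = 1 → n = 0 := by
    have keyN : ∀ n : ℕ, q ^ (n : ℤ) = 1 → (n : ℤ) = 0 := by
      intro n hn
      rw [zpow_natCast] at hn
      by_contra h0
      exact hq n (by omega) hn
    intro n hn
    rcases le_or_gt 0 n with h | h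
    · lift n to ℕ using h
      exact keyN n hn
    · have h1 : q ^ (-n) = 1 := by
        rw [zpow_neg, hn, inv_one]
      have := keyN (-n).toNat (by rwa [Int.toNat_of_nonneg (by omega)])
      omega
  intro a b hab
  have : q ^ (a - b) = 1 := by
    rw [zpow_sub₀ hq0, hab, div_self (zpow_ne_zero b hq0)]
  have := key _ this
  omega

private lemma stmt4_map_eig (K0 B : Module.End ℂ V) (c θ : ℂ)
    (hrel : K0 * B = c • (B * K0)) :
    Submodule.map B (Module.End.eigenspace K0 θ) ≤ Module.End.eigenspace K0 (c * θ) := by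
  rintro _ ⟨v, hv, rfl⟩
  have hv' : K0 v = θ • v := Module.End.mem_eigenspace_iff.mp hv
  rw [Module.End.mem_eigenspace_iff]
  have h1 := DFunLike.congr_fun hrel v
  simp only [Module.End.mul_apply, LinearMap.smul_apply] at h1
  rw [h1, hv', map_smul, smul_smul]

private lemma stmt4_not_forall [FiniteDimensional ℂ V] (K0 : Module.End ℂ V)
    (g : ℕ → ℂ) (hg : Function.Injective g) :
    ¬ ∀ k : ℕ, Module.End.HasEigenvalue K0 (g k) := by
  intro hall
  exact (Set.infinite_of_injective_forall_mem hg hall) K0.finite_hasEigenvalue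

end AuxStmt4

/-- a finite-dimensional irreducible `U'_q(L(sl₂))`-module of dimension
at least `2` has `K₀` diagonalizable with eigenvalues `s₀ q^(2i-d)`, `0 ≤ i ≤ d`,
for some positive integer `d` and `s₀ ∈ {1,-1}`, and `V` is the (direct) sum of the
corresponding eigenspaces. -/
theorem stmt4 (q : ℂ) (hq0 : q ≠ 0) (hq : ∀ n : ℕ, 0 < n → q ^ n ≠ 1)
    {V : Type*} [AddCommGroup V] [Module ℂ V] [FiniteDimensional ℂ V]
    (E0 E1p E1m K0 K1 : Module.End ℂ V) (h : IsUqpRep q E0 E1p E1m K0 K1)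
    (hirr : IsIrred E0 E1p E1m K0 K1) (hdim : 2 ≤ Module.finrank ℂ V) :
    ∃ (d : ℕ) (s0 : ℂ), 0 < d ∧ (s0 = 1 ∨ s0 = -1) ∧
      (∀ θ : ℂ, Module.End.HasEigenvalue K0 θ →
        ∃ i : ℕ, i ≤ d ∧ θ = s0 * q ^ (2 * (i : ℤ) - d)) ∧
      ⨆ i : Fin (d + 1), Module.End.eigenspace K0 (s0 * q ^ (2 * (i : ℤ) - d)) = ⊤ := by
  classical
  obtain ⟨hK01, hK10, hK0E0, hK1E1p, hK1E1m, hK1E0, hK0E1p, hK0E1m, hcomm, he0m, hse1, hse2⟩ := h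
  have zinj := stmt4_zpow_inj hq0 hq
  have hq2 : q ^ 2 ≠ 1 := hq 2 (by norm_num)
  have hq2' : (q : ℂ) ^ 2 ≠ 0 := pow_ne_zero 2 hq0
  have hqq : q - q⁻¹ ≠ 0 := by
    intro hqe
    apply hq2
    have h1 : q = q⁻¹ := sub_eq_zero.mp hqe
    calc q ^ 2 = q * q := sq q
      _ = q * q⁻¹ := by nth_rw 2 [h1]
      _ = 1 := mul_inv_cancel₀ hq0
  have hq2z : (q : ℂ) ^ (2 : ℤ) = q ^ 2 := by
    rw [show ((2 : ℤ)) = ((2 : ℕ) : ℤ) by norm_num, zpow_natCast]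
  have hpowN : ∀ k : ℕ, ((q ^ 2)⁻¹) ^ k = q ^ (-(2 * (k : ℤ))) := by
    intro k
    rw [inv_pow, zpow_neg]
    congr 1
    rw [show (2 * (k : ℤ)) = ((2 * k : ℕ) : ℤ) by push_cast; ring, zpow_natCast, pow_mul]
  have hK0K1v : ∀ v : V, K0 (K1 v) = v := fun v => by
    have h1 := DFunLike.congr_fun hK01 v; simpa using h1
  have hK1K0v : ∀ v : V, K1 (K0 v) = v := fun v => by
    have h1 := DFunLike.congr_fun hK10 v; simpa using h1
  have hK1eig : ∀ (φ : ℂ) (v : V), v ∈ Module.End.eigenspace K0 φ →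
      K1 v ∈ Module.End.eigenspace K0 φ := by
    intro φ v hv
    rw [Module.End.mem_eigenspace_iff] at hv ⊢
    rw [hK0K1v]
    conv_lhs => rw [← hK1K0v v, hv, map_smul]
  have hne0 : ∀ φ : ℂ, Module.End.HasEigenvalue K0 φ → φ ≠ 0 := by
    intro φ hφ h0
    obtain ⟨v, hv⟩ := hφ.exists_hasEigenvector
    obtain ⟨hv1, hv2⟩ := Module.End.hasEigenvector_iff.mp hv
    rw [Module.End.mem_eigenspace_iff, h0, zero_smul] at hv1
    have h1 := hK1K0v v
    rw [hv1, map_zero] at h1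
    exact hv2 h1.symm
  have hfr : 0 < Module.finrank ℂ V := by omega
  have hnontriv : Nontrivial V := Module.finrank_pos_iff.mp hfr
  obtain ⟨μ0, hμ0⟩ := Module.End.exists_eigenvalue K0
  have hμ0ne : μ0 ≠ 0 := hne0 _ hμ0
  -- a maximal eigenvalue
  have hmax : ∃ θ : ℂ, Module.End.HasEigenvalue K0 θ ∧
      ¬ Module.End.HasEigenvalue K0 (q ^ 2 * θ) := by
    by_contra hc
    push_neg at hc
    have hall : ∀ k : ℕ, Module.End.HasEigenvalue K0 ((q ^ 2) ^ k * μ0) := by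
      intro k
      induction k with
      | zero => simpa using hμ0
      | succ n ih =>
        have h2 : q ^ 2 * ((q ^ 2) ^ n * μ0) = (q ^ 2) ^ (n + 1) * μ0 := by ring
        exact h2 ▸ hc _ ih
    refine stmt4_not_forall K0 (fun k => (q ^ 2) ^ k * μ0) ?_ hall
    intro a b hab
    have h1 : (q ^ 2) ^ a = (q ^ 2) ^ b := mul_right_cancel₀ hμ0ne hab
    rw [← pow_mul, ← pow_mul, ← zpow_natCast q, ← zpow_natCast q] at h1
    have := zinj _ _ h1
    omega
  obtain ⟨θ, hθ, hθmax⟩ := hmax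
  have hθne : θ ≠ 0 := hne0 _ hθ
  obtain ⟨u, hu⟩ := hθ.exists_hasEigenvector
  obtain ⟨hu1, hu2⟩ := Module.End.hasEigenvector_iff.mp hu
  have hE1mu : E1m u = 0 := by
    have h1 : E1m u ∈ Module.End.eigenspace K0 (q ^ 2 * θ) :=
      stmt4_map_eig K0 E1m (q ^ 2) θ hK0E1m ⟨u, hu1, rfl⟩
    rw [Module.End.hasEigenvalue_iff, not_not] at hθmax
    rwa [hθmax, Submodule.mem_bot] at h1
  -- the string w k = E1p^k u
  set w : ℕ → V := fun k => (E1p ^ k) u with hwdef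
  have hw0 : w 0 = u := by simp [hwdef]
  have hwS : ∀ k, w (k + 1) = E1p (w k) := by
    intro k
    simp only [hwdef]
    rw [pow_succ']
    rfl
  have hK0w : ∀ k : ℕ, K0 (w k) = (((q ^ 2)⁻¹) ^ k * θ) • w k := by
    intro k
    induction k with
    | zero => rw [hw0, Module.End.mem_eigenspace_iff.mp hu1]; simp
    | succ n ih =>
      rw [hwS]
      have h1 := DFunLike.congr_fun hK0E1p (w n)
      simp only [Module.End.mul_apply, LinearMap.smul_apply] at h1
      rw [h1, ih, map_smul, smul_smul]
      congr 1
      ring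
  have hK1w : ∀ k : ℕ, K1 (w k) = ((q ^ 2) ^ k * θ⁻¹) • w k := by
    intro k
    have h1 : K1 (K0 (w k)) = w k := hK1K0v _
    rw [hK0w, map_smul] at h1
    have hcne : (((q ^ 2)⁻¹) ^ k * θ) ≠ 0 :=
      mul_ne_zero (pow_ne_zero _ (inv_ne_zero hq2')) hθne
    calc K1 (w k)
        = ((((q ^ 2)⁻¹) ^ k * θ))⁻¹ • ((((q ^ 2)⁻¹) ^ k * θ) • K1 (w k)) := by
          rw [smul_smul, inv_mul_cancel₀ hcne, one_smul]
      _ = ((q ^ 2) ^ k * θ⁻¹) • w k := by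
          rw [h1]
          congr 1
          rw [mul_inv, inv_pow, inv_inv]
  have hcom : ∀ x : V, E1m (E1p x) = E1p (E1m x) - (q - q⁻¹)⁻¹ • (K1 x - K0 x) := by
    intro x
    have h1 := DFunLike.congr_fun hcomm x
    simp only [LinearMap.sub_apply, Module.End.mul_apply, LinearMap.smul_apply] at h1
    rw [eq_sub_iff_add_eq, ← h1]
    abel
  set cf : ℕ → ℂ := fun k =>
    -(q - q⁻¹)⁻¹ * (∑ i ∈ Finset.range k, ((q ^ 2) ^ i * θ⁻¹ - ((q ^ 2)⁻¹) ^ i * θ)) with hcf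
  have hK1u : K1 u = θ⁻¹ • u := by
    have h1 := hK1w 0; rwa [hw0, pow_zero, one_mul] at h1
  have hEw : ∀ k : ℕ, E1m (w (k + 1)) = cf (k + 1) • w k := by
    intro k
    induction k with
    | zero =>
      rw [hwS, hw0, hcom u, hE1mu, map_zero, zero_sub,
        Module.End.mem_eigenspace_iff.mp hu1, hK1u]
      have hcf1 : cf (0 + 1) = -(q - q⁻¹)⁻¹ * (θ⁻¹ - θ) := by
        simp [hcf]
      rw [hcf1]
      module
    | succ n ih =>
      rw [hwS (n + 1), hcom (w (n + 1)), ih, map_smul, ← hwS n, hK1w (n + 1), hK0w (n + 1)]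
      have hcfs : cf (n + 1 + 1) = cf (n + 1) -
          (q - q⁻¹)⁻¹ * ((q ^ 2) ^ (n + 1) * θ⁻¹ - ((q ^ 2)⁻¹) ^ (n + 1) * θ) := by
        simp only [hcf]
        rw [Finset.sum_range_succ]
        ring
      rw [hcfs]
      module
  have hex : ∃ k : ℕ, w k = 0 := by
    by_contra hc
    push_neg at hc
    refine stmt4_not_forall K0 (fun k => ((q ^ 2)⁻¹) ^ k * θ) ?_ ?_
    · intro a b hab
      have h1 : ((q ^ 2)⁻¹) ^ a = ((q ^ 2)⁻¹) ^ b := mul_right_cancel₀ hθne hab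
      rw [hpowN a, hpowN b] at h1
      have := zinj _ _ h1
      omega
    · intro k
      exact Module.End.hasEigenvalue_of_hasEigenvector
        ⟨Module.End.mem_eigenspace_iff.mpr (hK0w k), hc k⟩
  have hn : w (Nat.find hex) = 0 := Nat.find_spec hex
  have hnpos : Nat.find hex ≠ 0 := by
    intro h0; rw [h0, hw0] at hn; exact hu2 hn
  obtain ⟨m, hm⟩ : ∃ m, Nat.find hex = m + 1 := ⟨Nat.find hex - 1, by omega⟩
  have hwm : w m ≠ 0 := Nat.find_min hex (by omega)
  have hc0 : cf (m + 1) = 0 := by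
    have hn' : w (m + 1) = 0 := hm ▸ hn
    have h1 := hEw m
    rw [hn', map_zero] at h1
    rcases smul_eq_zero.mp h1.symm with h2 | h2
    · exact h2
    · exact absurd h2 hwm
  have hsum : (∑ i ∈ Finset.range (m + 1), ((q ^ 2) ^ i * θ⁻¹ - ((q ^ 2)⁻¹) ^ i * θ)) = 0 := by
    simp only [hcf] at hc0
    rcases mul_eq_zero.mp hc0 with h2 | h2
    · exact absurd h2 (by simp [hqq])
    · exact h2
  have hS : (∑ i ∈ Finset.range (m + 1), (q ^ 2) ^ i) ≠ 0 := by
    rw [geom_sum_eq hq2]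
    apply div_ne_zero
    · intro h2
      apply hq (2 * (m + 1)) (by omega)
      have h3 : (q ^ 2) ^ (m + 1) = 1 := sub_eq_zero.mp h2
      rwa [← pow_mul] at h3
    · exact sub_ne_zero.mpr hq2
  have hrefl : (∑ i ∈ Finset.range (m + 1), ((q ^ 2)⁻¹) ^ i) =
      ((q ^ 2)⁻¹) ^ m * (∑ i ∈ Finset.range (m + 1), (q ^ 2) ^ i) := by
    rw [Finset.mul_sum, ← Finset.sum_range_reflect (fun i => ((q ^ 2)⁻¹) ^ i) (m + 1)]
    apply Finset.sum_congr rfl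
    intro j hj
    simp only [Finset.mem_range] at hj
    have h2 : m + 1 - 1 - j = m - j := by omega
    have h1 : (q ^ 2) ^ m = (q ^ 2) ^ (m - j) * (q ^ 2) ^ j := by
      rw [← pow_add]; congr 1; omega
    rw [h2, inv_pow, inv_pow, h1, mul_inv, mul_assoc,
      inv_mul_cancel₀ (pow_ne_zero _ hq2'), mul_one]
  have hθ2 : θ ^ 2 = (q ^ 2) ^ m := by
    rw [Finset.sum_sub_distrib, sub_eq_zero, ← Finset.sum_mul, ← Finset.sum_mul, hrefl] at hsum
    have h2 : θ⁻¹ = θ * ((q ^ 2)⁻¹) ^ m := by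
      have h3 : (∑ i ∈ Finset.range (m + 1), (q ^ 2) ^ i) * θ⁻¹ =
          (∑ i ∈ Finset.range (m + 1), (q ^ 2) ^ i) * (θ * ((q ^ 2)⁻¹) ^ m) := by
        rw [hsum]; ring
      exact mul_left_cancel₀ hS h3
    have h3 : (1 : ℂ) = θ ^ 2 * (((q ^ 2) ^ m))⁻¹ := by
      calc (1 : ℂ) = θ * θ⁻¹ := (mul_inv_cancel₀ hθne).symm
        _ = θ * (θ * ((q ^ 2)⁻¹) ^ m) := by rw [← h2]
        _ = θ ^ 2 * (((q ^ 2) ^ m))⁻¹ := by rw [inv_pow]; ring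
    have h4 := congrArg (· * (q ^ 2) ^ m) h3
    simp only [one_mul] at h4
    rw [mul_assoc, inv_mul_cancel₀ (pow_ne_zero _ hq2'), mul_one] at h4
    exact h4.symm
  set s0 : ℂ := θ / q ^ m with hs0def
  have hθs0 : θ = s0 * q ^ m := by
    rw [hs0def, div_mul_cancel₀ _ (pow_ne_zero _ hq0)]
  have hs0sq : s0 ^ 2 = 1 := by
    rw [hs0def, div_pow, hθ2, div_eq_one_iff_eq (pow_ne_zero _ (pow_ne_zero _ hq0)),
      ← pow_mul, ← pow_mul, Nat.mul_comm]
  have hs0or : s0 = 1 ∨ s0 = -1 := by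
    have h1 : (s0 - 1) * (s0 + 1) = 0 := by linear_combination hs0sq
    rcases mul_eq_zero.mp h1 with h2 | h2
    · exact Or.inl (sub_eq_zero.mp h2)
    · exact Or.inr (eq_neg_of_add_eq_zero_left h2)
  -- the coset submodule
  set Wc : Submodule ℂ V := ⨆ k : ℤ, Module.End.eigenspace K0 (q ^ (2 * k) * θ) with hWc
  have hscal : ∀ k : ℤ, q ^ 2 * (q ^ (2 * k) * θ) = q ^ (2 * (k + 1)) * θ := by
    intro k
    rw [show (2 * (k + 1)) = 2 * k + 2 by ring, zpow_add₀ hq0, hq2z]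
    ring
  have hscal' : ∀ k : ℤ, (q ^ 2)⁻¹ * (q ^ (2 * k) * θ) = q ^ (2 * (k - 1)) * θ := by
    intro k
    rw [show (2 * (k - 1)) = 2 * k + (-2) by ring, zpow_add₀ hq0, zpow_neg, hq2z]
    ring
  have hmapWc : ∀ B : Module.End ℂ V,
      (∀ k : ℤ, Submodule.map B (Module.End.eigenspace K0 (q ^ (2 * k) * θ)) ≤ Wc) →
      ∀ v ∈ Wc, B v ∈ Wc := by
    intro B hB v hv
    have h1 : Submodule.map B Wc ≤ Wc := by
      rw [hWc, Submodule.map_iSup]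
      exact iSup_le hB
    exact h1 ⟨v, hv, rfl⟩
  have hWcE0 : ∀ v ∈ Wc, E0 v ∈ Wc := by
    apply hmapWc
    intro k
    refine le_trans (stmt4_map_eig K0 E0 (q ^ 2) _ hK0E0) ?_
    rw [hscal k]
    exact le_iSup (fun k : ℤ => Module.End.eigenspace K0 (q ^ (2 * k) * θ)) (k + 1)
  have hWcE1m : ∀ v ∈ Wc, E1m v ∈ Wc := by
    apply hmapWc
    intro k
    refine le_trans (stmt4_map_eig K0 E1m (q ^ 2) _ hK0E1m) ?_
    rw [hscal k]
    exact le_iSup (fun k : ℤ => Module.End.eigenspace K0 (q ^ (2 * k) * θ)) (k + 1)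
  have hWcE1p : ∀ v ∈ Wc, E1p v ∈ Wc := by
    apply hmapWc
    intro k
    refine le_trans (stmt4_map_eig K0 E1p ((q ^ 2)⁻¹) _ hK0E1p) ?_
    rw [hscal' k]
    exact le_iSup (fun k : ℤ => Module.End.eigenspace K0 (q ^ (2 * k) * θ)) (k - 1)
  have hWcK0 : ∀ v ∈ Wc, K0 v ∈ Wc := by
    apply hmapWc
    intro k
    rintro _ ⟨v, hv, rfl⟩
    rw [Module.End.mem_eigenspace_iff.mp hv]
    exact Submodule.smul_mem _ _
      (le_iSup (fun k : ℤ => Module.End.eigenspace K0 (q ^ (2 * k) * θ)) k hv)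
  have hWcK1 : ∀ v ∈ Wc, K1 v ∈ Wc := by
    apply hmapWc
    intro k
    rintro _ ⟨v, hv, rfl⟩
    exact le_iSup (fun k : ℤ => Module.End.eigenspace K0 (q ^ (2 * k) * θ)) k (hK1eig _ v hv)
  have hWcTop : Wc = ⊤ := by
    rcases hirr Wc hWcE0 hWcE1p hWcE1m hWcK0 hWcK1 with h1 | h1
    · exfalso
      have h2 : Module.End.eigenspace K0 θ ≤ Wc := by
        have h3 := le_iSup (fun k : ℤ => Module.End.eigenspace K0 (q ^ (2 * k) * θ)) 0
        simpa using h3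
      rw [h1, le_bot_iff] at h2
      exact (Module.End.hasEigenvalue_iff.mp hθ) h2
    · exact h1
  have hclass : ∀ φ : ℂ, Module.End.HasEigenvalue K0 φ → ∃ k : ℤ, φ = q ^ (2 * k) * θ := by
    intro φ hφ
    by_contra hc
    push_neg at hc
    have h1 : Module.End.eigenspace K0 φ ≤
        ⨆ (μ : ℂ) (_ : μ ≠ φ), Module.End.eigenspace K0 μ := by
      calc Module.End.eigenspace K0 φ ≤ ⊤ := le_top
        _ = Wc := hWcTop.symm
        _ ≤ ⨆ (μ : ℂ) (_ : μ ≠ φ), Module.End.eigenspace K0 μ := by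
            rw [hWc]
            apply iSup_le
            intro k
            exact le_iSup₂ (f := fun (μ : ℂ) (_ : μ ≠ φ) => Module.End.eigenspace K0 μ)
              (q ^ (2 * k) * θ) (Ne.symm (hc k))
    have h2 := (Module.End.eigenspaces_iSupIndep K0) (i := φ)
    have h3 : Module.End.eigenspace K0 φ ≤ ⊥ := h2 le_rfl h1
    exact (Module.End.hasEigenvalue_iff.mp hφ) (le_bot_iff.mp h3)
  have hKfin : Set.Finite {k : ℤ | Module.End.HasEigenvalue K0 (q ^ (2 * k) * θ)} := by
    apply Set.Finite.preimage ?_ K0.finite_hasEigenvalue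
    intro a _ b _ hab
    have h1 : q ^ (2 * a) = q ^ (2 * b) := mul_right_cancel₀ hθne hab
    have := zinj _ _ h1
    omega
  obtain ⟨bU, hbU⟩ := hKfin.bddAbove
  obtain ⟨bL, hbL⟩ := hKfin.bddBelow
  set B : ℕ := bU.natAbs + bL.natAbs with hB
  refine ⟨m + 2 * B + 2, s0, by omega, hs0or, ?_, ?_⟩
  all_goals {
    have hrep : ∀ φ : ℂ, Module.End.HasEigenvalue K0 φ →
        ∃ i : ℕ, i ≤ m + 2 * B + 2 ∧ φ = s0 * q ^ (2 * (i : ℤ) - (m + 2 * B + 2 : ℕ)) := by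
      intro φ hφ
      obtain ⟨k, hk⟩ := hclass φ hφ
      have hkmem : k ∈ {k : ℤ | Module.End.HasEigenvalue K0 (q ^ (2 * k) * θ)} := by
        rw [Set.mem_setOf_eq, ← hk]; exact hφ
      have hkU : k ≤ bU := hbU hkmem
      have hkL : bL ≤ k := hbL hkmem
      refine ⟨(↑m + k + ↑B + 1).toNat, by omega, ?_⟩
      have hexp : 2 * (((↑m + k + ↑B + 1).toNat : ℤ)) - ((m + 2 * B + 2 : ℕ) : ℤ) =
          (m : ℤ) + 2 * k := by
        push_cast
        omega
      rw [hk, hθs0, hexp, zpow_add₀ hq0, zpow_natCast]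
      ring
    first
    | exact hrep
    | · rw [← top_le_iff, ← hWcTop, hWc]
        apply iSup_le
        intro k
        by_cases hk : Module.End.HasEigenvalue K0 (q ^ (2 * k) * θ)
        · obtain ⟨i, hi, hik⟩ := hrep _ hk
          have h5 := le_iSup (fun i : Fin (m + 2 * B + 2 + 1) =>
            Module.End.eigenspace K0 (s0 * q ^ (2 * ((i : ℕ) : ℤ) - (m + 2 * B + 2 : ℕ))))
            ⟨i, by omega⟩
          calc Module.End.eigenspace K0 (q ^ (2 * k) * θ)
              = Module.End.eigenspace K0 (s0 * q ^ (2 * (i : ℤ) - (m + 2 * B + 2 : ℕ))) := by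
                rw [← hik]
            _ ≤ _ := by simpa using h5
        · rw [Module.End.hasEigenvalue_iff, not_not] at hk
          rw [hk]
          exact bot_le
  }

end
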